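/- arXiv:2206.01860 — 3 statements merged into one kernel-verified Lean document; each statement's English description precedes it below -/
import Mathlib

section
/- (Policy switching improvement) Let Δ be a nonempty finite set of H-length policies. Define the policy-switching policy π_ps(Δ) by: for each x ∈ X and h ∈ {1,...,H}, π_ps(Δ)_h(x) = φ*_h(x) where φ* ∈ argmax_{φ ∈ Δ} V^φ_{H-h+1}(x). Then V^{π_ps(Δ)}_H(x) ≥ V^φ_H(x) for every φ ∈ Δ and every x ∈ X. -/
open Finset

/-- A finite MDP with finite state set `X`, finite admissible action sets, reward `R`,
transition probabilities `P`, and discount factor `disc ∈ (0,1)`. -/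
structure MDP (X A : Type) [Fintype X] [Fintype A] where
  Adm : X → Finset A
  adm_nonempty : ∀ x, (Adm x).Nonempty
  R : X → A → ℝ
  P : A → X → X → ℝ
  P_nonneg : ∀ a x y, 0 ≤ P a x y
  P_sum : ∀ a x, ∑ y, P a x y = 1
  disc : ℝ
  disc_pos : 0 < disc
  disc_lt_one : disc < 1

variable {X A : Type} [Fintype X] [Fintype A]

/-- `h`-horizon value of the `H`-length policy `π` (entries `0`-indexed: the entry applied
at value-level `h ≥ 1` is the one at position `H - h`, i.e. 1-indexed position `H - h + 1`). -/
noncomputable def MDP.val (M : MDP X A) {H : ℕ} (π : Fin H → X → A) : ℕ → X → ℝ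
  | 0, _ => 0
  | h + 1, x =>
      if hlt : H - (h + 1) < H then
        M.R x (π ⟨H - (h + 1), hlt⟩ x) +
          M.disc * ∑ y, M.P (π ⟨H - (h + 1), hlt⟩ x) x y * MDP.val M π h y
      else 0

/-- The set `Π(X)^H` of admissible `H`-length policies. -/
def MDP.Pol (M : MDP X A) (H : ℕ) : Type :=
  { π : Fin H → X → A // ∀ m x, π m x ∈ M.Adm x }

instance (M : MDP X A) (H : ℕ) : Finite (M.Pol H) := Subtype.finite

noncomputable instance (M : MDP X A) (H : ℕ) : Fintype (M.Pol H) :=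
  Fintype.ofFinite _

instance (M : MDP X A) (H : ℕ) : Nonempty (M.Pol H) :=
  ⟨⟨fun _ x => (M.adm_nonempty x).choose, fun _ x => (M.adm_nonempty x).choose_spec⟩⟩

/-- Optimal `H`-horizon value function `V*_H`. -/
noncomputable def MDP.Vopt (M : MDP X A) (H : ℕ) (x : X) : ℝ :=
  Finset.univ.sup' Finset.univ_nonempty fun π : M.Pol H => M.val π.1 H x

/-- The value-iteration operator `T`. -/
noncomputable def MDP.T (M : MDP X A) (u : X → ℝ) (x : X) : ℝ :=
  (M.Adm x).sup' (M.adm_nonempty x) fun a => M.R x a + M.disc * ∑ y, M.P a x y * u y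

/-- Switchable action set `S^π_h(x)`. -/
def MDP.Sw (M : MDP X A) {H : ℕ} (π : Fin H → X → A) (h : ℕ) (x : X) : Set A :=
  { a | a ∈ M.Adm x ∧
      M.val π h x < M.R x a + M.disc * ∑ y, M.P a x y * M.val π (h - 1) y }

/-- Improvable-state set `I^{π,H}` of pairs `(h, x)` with `1 ≤ h ≤ H` and `S^π_h(x) ≠ ∅`. -/
def MDP.Imp (M : MDP X A) {H : ℕ} (π : Fin H → X → A) : Set (ℕ × X) :=
  { p | 1 ≤ p.1 ∧ p.1 ≤ H ∧ (M.Sw π p.1 p.2).Nonempty }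

/-- `φ >_H ψ` : `φ` strictly improves `ψ` over horizon `H`. -/
def MDP.StrictImp (M : MDP X A) {H : ℕ} (φ ψ : Fin H → X → A) : Prop :=
  (∀ x, M.val ψ H x ≤ M.val φ H x) ∧ ∃ s, M.val ψ H s < M.val φ H s

/-- `β^{π,H}` : all policies obtained from `π` by switching, on a nonempty subset
`I ⊆ I^{π,H}`, the prescribed action to a switchable one, keeping all other entries.
(The entry at 0-indexed position `m` is the one applied at value-level `H - m`.) -/
def MDP.beta (M : MDP X A) {H : ℕ} (π : Fin H → X → A) : Set (Fin H → X → A) :=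
  { π' | ∃ I : Set (ℕ × X), I.Nonempty ∧ I ⊆ M.Imp π ∧
      (∀ (m : Fin H) (x : X), (H - m.1, x) ∈ I → π' m x ∈ M.Sw π (H - m.1) x) ∧
      (∀ (m : Fin H) (x : X), (H - m.1, x) ∉ I → π' m x = π m x) }

/-- `β^{π,H}_x` : all policies obtained from `π` by switching actions only at state `x0`,
at a nonempty set `I` of improvable levels, keeping all other entries. -/
def MDP.betaAt (M : MDP X A) {H : ℕ} (π : Fin H → X → A) (x0 : X) : Set (Fin H → X → A) :=
  { π' | ∃ I : Set ℕ, I.Nonempty ∧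
      (∀ h ∈ I, 1 ≤ h ∧ h ≤ H ∧ (M.Sw π h x0).Nonempty) ∧
      (∀ m : Fin H, H - m.1 ∈ I → π' m x0 ∈ M.Sw π (H - m.1) x0) ∧
      (∀ (m : Fin H) (x : X), x ≠ x0 ∨ H - m.1 ∉ I → π' m x = π m x) }

/-- policy switching over a nonempty finite set `Δ` of `H`-length policies
weakly dominates every member of `Δ` over horizon `H`. -/
theorem policy_switching_improvement (M : MDP X A) {H : ℕ}
    (Δ : Finset (M.Pol H)) (hΔ : Δ.Nonempty) (ps : M.Pol H)
    (hps : ∀ (m : Fin H) (x : X), ∃ φ ∈ Δ,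
      ps.1 m x = φ.1 m x ∧ ∀ ψ ∈ Δ, M.val ψ.1 (H - m.1) x ≤ M.val φ.1 (H - m.1) x) :
    ∀ φ ∈ Δ, ∀ x, M.val φ.1 H x ≤ M.val ps.1 H x := by
  suffices h : ∀ h ≤ H, ∀ φ ∈ Δ, ∀ x, M.val φ.1 h x ≤ M.val ps.1 h x from
    fun φ hφ x => h H le_rfl φ hφ x
  intro h
  induction h with
  | zero => intro _ φ _ x; simp [MDP.val]
  | succ h ih =>
    intro hle φ hφ x
    have hlt : H - (h + 1) < H := by omega
    set m : Fin H := ⟨H - (h + 1), hlt⟩ with hm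
    have hmv : H - m.1 = h + 1 := by simp [hm]; omega
    obtain ⟨φs, hφs, heq, hmax⟩ := hps m x
    rw [hmv] at hmax
    have h1 : M.val φ.1 (h + 1) x ≤ M.val φs.1 (h + 1) x := hmax φ hφ
    refine h1.trans ?_
    show M.val φs.1 (h + 1) x ≤ M.val ps.1 (h + 1) x
    simp only [MDP.val, dif_pos hlt]
    rw [show (⟨H - (h+1), hlt⟩ : Fin H) = m from rfl, ← heq]
    gcongr with y _
    · exact M.disc_pos.le
    · exact M.P_nonneg _ _ _
    · exact ih (by omega) φs hφs y
end

section
/- (Convergence of synchronous PIPS) Define a sequence of H-length policies by choosing π_1 arbitrarily and, while I^{π_n,H} ≠ ∅, setting π_{n+1} = π_ps(β^{π_n,H}). Then there exists a finite N such that I^{π_N,H} = ∅, and π_N is an optimal H-length policy, i.e., V^{π_N}_H = V*_H. -/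
open Finset

variable {X A : Type} [Fintype X] [Fintype A]

section AuxPIPS

namespace MDP

lemma val_succ (M : MDP X A) {H : ℕ} (π : Fin H → X → A) {h : ℕ} (hh : h + 1 ≤ H) (x : X) :
    M.val π (h + 1) x =
      M.R x (π ⟨H - (h + 1), Nat.sub_lt (by omega) (by omega)⟩ x) +
        M.disc * ∑ y, M.P (π ⟨H - (h + 1), Nat.sub_lt (by omega) (by omega)⟩ x) x y *
          M.val π h y := by
  rw [MDP.val, dif_pos (Nat.sub_lt (by omega) (by omega))]

lemma step_le (M : MDP X A) {u v : X → ℝ} (huv : ∀ y, u y ≤ v y) (a : A) (x : X) :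
    M.R x a + M.disc * ∑ y, M.P a x y * u y ≤ M.R x a + M.disc * ∑ y, M.P a x y * v y := by
  have hsum : ∑ y, M.P a x y * u y ≤ ∑ y, M.P a x y * v y :=
    Finset.sum_le_sum fun y _ => mul_le_mul_of_nonneg_left (huv y) (M.P_nonneg a x y)
  exact add_le_add le_rfl (mul_le_mul_of_nonneg_left hsum M.disc_pos.le)

/-- Every member of `β^{π,H}` weakly dominates `π` at every level `≤ H`. -/
lemma beta_le (M : MDP X A) {H : ℕ} {π ψ : Fin H → X → A} (hψ : ψ ∈ M.beta π) :
    ∀ h ≤ H, ∀ x, M.val π h x ≤ M.val ψ h x := by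
  obtain ⟨I, _, hIsub, hsw, hkeep⟩ := hψ
  intro h
  induction h with
  | zero => intro _ x; simp [MDP.val]
  | succ h ih =>
    intro hh x
    have ih' : ∀ y, M.val π h y ≤ M.val ψ h y := ih (by omega)
    set m : Fin H := ⟨H - (h + 1), Nat.sub_lt (by omega) (by omega)⟩ with hmdef
    have hm : H - m.1 = h + 1 := by simp only [hmdef]; omega
    by_cases hI : (h + 1, x) ∈ I
    · have hsw' := hsw m x (by rw [hm]; exact hI)
      rw [hm] at hsw'
      obtain ⟨-, hlt⟩ := hsw'
      have h1 : (h + 1) - 1 = h := by omega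
      rw [h1] at hlt
      calc M.val π (h + 1) x
          ≤ M.R x (ψ m x) + M.disc * ∑ y, M.P (ψ m x) x y * M.val π h y := hlt.le
        _ ≤ M.R x (ψ m x) + M.disc * ∑ y, M.P (ψ m x) x y * M.val ψ h y :=
            M.step_le ih' _ _
        _ = M.val ψ (h + 1) x := (M.val_succ ψ hh x).symm
    · have heq := hkeep m x (by rw [hm]; exact hI)
      rw [M.val_succ π hh x, M.val_succ ψ hh x, heq]
      exact M.step_le ih' _ _

/-- Strict improvement at every point of the switching set `I`. -/
lemma beta_lt (M : MDP X A) {H : ℕ} {π ψ : Fin H → X → A}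
    {I : Set (ℕ × X)} (hIsub : I ⊆ M.Imp π)
    (hsw : ∀ (m : Fin H) (x : X), (H - m.1, x) ∈ I → ψ m x ∈ M.Sw π (H - m.1) x)
    (hkeep : ∀ (m : Fin H) (x : X), (H - m.1, x) ∉ I → ψ m x = π m x)
    {h0 : ℕ} {x0 : X} (hmem : (h0, x0) ∈ I) :
    M.val π h0 x0 < M.val ψ h0 x0 := by
  have hβ : ψ ∈ M.beta π := ⟨I, ⟨_, hmem⟩, hIsub, hsw, hkeep⟩
  obtain ⟨h1, hH, -⟩ := hIsub hmem
  obtain ⟨h, rfl⟩ : ∃ h, h0 = h + 1 := ⟨h0 - 1, by omega⟩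
  set m : Fin H := ⟨H - (h + 1), Nat.sub_lt (by omega) (by omega)⟩ with hmdef
  have hm : H - m.1 = h + 1 := by simp only [hmdef]; omega
  have hsw' := hsw m x0 (by rw [hm]; exact hmem)
  rw [hm] at hsw'
  obtain ⟨-, hlt⟩ := hsw'
  have h1' : (h + 1) - 1 = h := by omega
  rw [h1'] at hlt
  calc M.val π (h + 1) x0
      < M.R x0 (ψ m x0) + M.disc * ∑ y, M.P (ψ m x0) x0 y * M.val π h y := hlt
    _ ≤ M.R x0 (ψ m x0) + M.disc * ∑ y, M.P (ψ m x0) x0 y * M.val ψ h y :=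
        M.step_le (fun y => M.beta_le hβ h (by omega) y) _ _
    _ = M.val ψ (h + 1) x0 := (M.val_succ ψ hH x0).symm

end MDP

end AuxPIPS

/-- convergence of synchronous PIPS: iterating `π_{n+1} = π_ps(β^{π_n,H})`
while `I^{π_n,H} ≠ ∅` reaches, in finitely many steps, a policy with empty improvable set,
which is optimal for `M_H`. -/
theorem synchronous_PIPS_converges (M : MDP X A) {H : ℕ} (π : ℕ → M.Pol H)
    (hstep : ∀ n, (M.Imp (π n).1).Nonempty →
      ∀ (m : Fin H) (x : X), ∃ φ ∈ M.beta (π n).1,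
        (π (n + 1)).1 m x = φ m x ∧
        ∀ ψ ∈ M.beta (π n).1, M.val ψ (H - m.1) x ≤ M.val φ (H - m.1) x)
    (hstop : ∀ n, ¬(M.Imp (π n).1).Nonempty → π (n + 1) = π n) :
    ∃ N, M.Imp (π N).1 = ∅ ∧ ∀ x, M.val (π N).1 H x = M.Vopt H x := by
  classical
  have key : ∀ n, (M.Imp (π n).1).Nonempty →
      ∀ h ≤ H, ∀ x, ∀ ψ ∈ M.beta (π n).1, M.val ψ h x ≤ M.val (π (n + 1)).1 h x := by
    intro n hne h
    induction h with
    | zero => intro _ x ψ _; simp [MDP.val]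
    | succ h ih =>
      intro hh x ψ hψ
      set m : Fin H := ⟨H - (h + 1), Nat.sub_lt (by omega) (by omega)⟩ with hmdef
      have hm : H - m.1 = h + 1 := by simp only [hmdef]; omega
      obtain ⟨φ, hφβ, heq, hdom⟩ := hstep n hne m x
      rw [hm] at hdom
      have ihφ : ∀ y, M.val φ h y ≤ M.val (π (n + 1)).1 h y :=
        fun y => ih (by omega) y φ hφβ
      calc M.val ψ (h + 1) x ≤ M.val φ (h + 1) x := hdom ψ hψ
        _ = M.R x (φ m x) + M.disc * ∑ y, M.P (φ m x) x y * M.val φ h y := M.val_succ φ hh x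
        _ ≤ M.R x (φ m x) + M.disc * ∑ y, M.P (φ m x) x y * M.val (π (n + 1)).1 h y :=
            M.step_le ihφ _ _
        _ = M.val (π (n + 1)).1 (h + 1) x := by
            rw [M.val_succ (π (n + 1)).1 hh x, heq]
  set F : M.Pol H → ℝ := fun p => ∑ h ∈ Finset.range (H + 1), ∑ x, M.val p.1 h x with hF
  have hprog : ∀ n, (M.Imp (π n).1).Nonempty → F (π n) < F (π (n + 1)) := by
    intro n hne
    obtain ⟨⟨h0, x0⟩, hmem⟩ := hne
    obtain ⟨hh1, hhH, ⟨a, haSw⟩⟩ := hmem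
    set I : Set (ℕ × X) := {(h0, x0)} with hI
    set ψ : Fin H → X → A :=
      fun m x => if H - m.1 = h0 ∧ x = x0 then a else (π n).1 m x with hψdef
    have hsw : ∀ (m : Fin H) (x : X), (H - m.1, x) ∈ I →
        ψ m x ∈ M.Sw (π n).1 (H - m.1) x := by
      intro m x hmx
      simp only [hI, Set.mem_singleton_iff, Prod.mk.injEq] at hmx
      obtain ⟨hm0, hx0⟩ := hmx
      simp only [hψdef, if_pos (And.intro hm0 hx0)]
      rw [hm0, hx0]; exact haSw
    have hkeep : ∀ (m : Fin H) (x : X), (H - m.1, x) ∉ I → ψ m x = (π n).1 m x := by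
      intro m x hmx
      simp only [hI, Set.mem_singleton_iff, Prod.mk.injEq] at hmx
      simp only [hψdef]
      rw [if_neg]
      intro hc; exact hmx ⟨hc.1, hc.2⟩
    have hIsub : I ⊆ M.Imp (π n).1 := by
      intro p hp; simp only [hI, Set.mem_singleton_iff] at hp; subst hp
      exact ⟨hh1, hhH, a, haSw⟩
    have hψβ : ψ ∈ M.beta (π n).1 := ⟨I, ⟨_, rfl⟩, hIsub, hsw, hkeep⟩
    have hne' : (M.Imp (π n).1).Nonempty := ⟨_, hIsub rfl⟩
    have hwk : ∀ h ≤ H, ∀ x, M.val (π n).1 h x ≤ M.val (π (n + 1)).1 h x := by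
      intro h hh x
      exact le_trans (M.beta_le hψβ h hh x) (key n hne' h hh x ψ hψβ)
    have hst : M.val (π n).1 h0 x0 < M.val (π (n + 1)).1 h0 x0 :=
      lt_of_lt_of_le (M.beta_lt hIsub hsw hkeep rfl)
        (key n hne' h0 hhH x0 ψ hψβ)
    apply Finset.sum_lt_sum
    · intro h hhr
      simp only [Finset.mem_range] at hhr
      exact Finset.sum_le_sum fun x _ => hwk h (by omega) x
    · refine ⟨h0, Finset.mem_range.2 (by omega), ?_⟩
      exact Finset.sum_lt_sum (fun x _ => hwk h0 hhH x) ⟨x0, Finset.mem_univ _, hst⟩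
  have hex : ∃ N, ¬(M.Imp (π N).1).Nonempty := by
    by_contra hall
    push_neg at hall
    have hmono : StrictMono fun n => F (π n) :=
      strictMono_nat_of_lt_succ fun n => hprog n (hall n)
    obtain ⟨a, b, hab, heq⟩ := Finite.exists_ne_map_eq_of_infinite π
    rcases hab.lt_or_gt with h | h
    · exact absurd (congrArg F heq) (hmono h).ne
    · exact absurd (congrArg F heq.symm) (hmono h).ne
  obtain ⟨N, hN⟩ := hex
  rw [Set.not_nonempty_iff_eq_empty] at hN
  refine ⟨N, hN, ?_⟩
  have hopt : ∀ ψ : M.Pol H, ∀ h ≤ H, ∀ x, M.val ψ.1 h x ≤ M.val (π N).1 h x := by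
    intro ψ h
    induction h with
    | zero => intro _ x; simp [MDP.val]
    | succ h ih =>
      intro hh x
      set m : Fin H := ⟨H - (h + 1), Nat.sub_lt (by omega) (by omega)⟩ with hmdef
      have hnotSw : ψ.1 m x ∉ M.Sw (π N).1 (h + 1) x := by
        intro hc
        have hmem : ((h + 1 : ℕ), x) ∈ M.Imp (π N).1 := ⟨by omega, hh, _, hc⟩
        rw [hN] at hmem; exact hmem
      have hle : M.R x (ψ.1 m x) + M.disc * ∑ y, M.P (ψ.1 m x) x y * M.val (π N).1 h y ≤
          M.val (π N).1 (h + 1) x := by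
        by_contra hc
        push_neg at hc
        apply hnotSw
        refine ⟨ψ.2 m x, ?_⟩
        have h1 : (h + 1) - 1 = h := by omega
        rw [h1]; exact hc
      calc M.val ψ.1 (h + 1) x
          = M.R x (ψ.1 m x) + M.disc * ∑ y, M.P (ψ.1 m x) x y * M.val ψ.1 h y :=
            M.val_succ ψ.1 hh x
        _ ≤ M.R x (ψ.1 m x) + M.disc * ∑ y, M.P (ψ.1 m x) x y * M.val (π N).1 h y :=
            M.step_le (fun y => ih (by omega) y) _ _
        _ ≤ M.val (π N).1 (h + 1) x := hle
  intro x
  rw [MDP.Vopt]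
  apply le_antisymm
  · exact Finset.le_sup' (f := fun p : M.Pol H => M.val p.1 H x) (Finset.mem_univ (π N))
  · exact Finset.sup'_le _ _ fun ψ _ => hopt ψ H le_rfl x
end

section
/- (Rolling-horizon error bound) Let π*(H) be an optimal H-length policy for M_H with terminal function V*_0 = 0, and let [π*(H)_1] be the stationary infinite-horizon policy using its first entry. Then ‖V^{[π*(H)_1]}_∞ − V*_∞‖_∞ ≤ (2 γ^H / (1 − γ)) ‖V*_∞‖_∞, where V*_∞ is the optimal infinite-horizon discounted value function. -/
open Finset

variable {X A : Type} [Fintype X] [Fintype A]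

open scoped Classical in
/-- State distribution at step `l` when following the (infinite-length) policy `φ` from `x0`. -/
noncomputable def MDP.dist (M : MDP X A) (φ : ℕ → X → A) (x0 : X) : ℕ → X → ℝ
  | 0, x => if x = x0 then 1 else 0
  | l + 1, x => ∑ y, MDP.dist M φ x0 l y * M.P (φ l y) y x

/-- Infinite-horizon discounted value of the policy `φ` started at `x0`. -/
noncomputable def MDP.Vinf (M : MDP X A) (φ : ℕ → X → A) (x0 : X) : ℝ :=
  ∑' l : ℕ, M.disc ^ l * ∑ x, M.dist φ x0 l x * M.R x (φ l x)

/-- Optimal infinite-horizon discounted value function `V*_∞`. -/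
noncomputable def MDP.VinfOpt (M : MDP X A) (x : X) : ℝ :=
  ⨆ φ : { φ : ℕ → X → A // ∀ l s, φ l s ∈ M.Adm s }, M.Vinf φ.1 x


/-! ### Auxiliary machinery -/

namespace MDP

variable (M : MDP X A)

/-- Bellman operator of a fixed decision rule `d`. -/
noncomputable def Td (d : X → A) (u : X → ℝ) (x : X) : ℝ :=
  M.R x (d x) + M.disc * ∑ y, M.P (d x) x y * u y

end MDP
/-- Value iteration iterates `T^n 0`. -/
noncomputable def MDP.W {X A : Type} [Fintype X] [Fintype A] (M : MDP X A) : ℕ → X → ℝ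
  | 0 => fun _ => 0
  | n + 1 => M.T (M.W n)

namespace MDP
variable (M : MDP X A)

lemma disc_nonneg : 0 ≤ M.disc := M.disc_pos.le

lemma sum_P_mul_le_of_le {a : A} {x : X} {u v : X → ℝ} (h : ∀ y, u y ≤ v y) :
    ∑ y, M.P a x y * u y ≤ ∑ y, M.P a x y * v y :=
  Finset.sum_le_sum fun y _ => mul_le_mul_of_nonneg_left (h y) (M.P_nonneg a x y)

lemma abs_sum_P_mul_le {a : A} {x : X} {u : X → ℝ} {c : ℝ} (h : ∀ y, |u y| ≤ c) :
    |∑ y, M.P a x y * u y| ≤ c := by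
  calc |∑ y, M.P a x y * u y| ≤ ∑ y, |M.P a x y * u y| := Finset.abs_sum_le_sum_abs _ _
    _ ≤ ∑ y, M.P a x y * c := by
        refine Finset.sum_le_sum fun y _ => ?_
        rw [abs_mul, abs_of_nonneg (M.P_nonneg a x y)]
        exact mul_le_mul_of_nonneg_left (h y) (M.P_nonneg a x y)
    _ = c := by rw [← Finset.sum_mul, M.P_sum, one_mul]

lemma le_T {u : X → ℝ} {x : X} {a : A} (ha : a ∈ M.Adm x) :
    M.R x a + M.disc * ∑ y, M.P a x y * u y ≤ M.T u x :=
  Finset.le_sup' (fun a => M.R x a + M.disc * ∑ y, M.P a x y * u y) ha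

lemma T_le {u : X → ℝ} {x : X} {c : ℝ}
    (h : ∀ a ∈ M.Adm x, M.R x a + M.disc * ∑ y, M.P a x y * u y ≤ c) :
    M.T u x ≤ c :=
  Finset.sup'_le _ _ h

lemma Td_le_T {d : X → A} {u : X → ℝ} {x : X} (hd : d x ∈ M.Adm x) :
    M.Td d u x ≤ M.T u x :=
  M.le_T hd

lemma Td_mono {d : X → A} {u v : X → ℝ} (h : ∀ y, u y ≤ v y) (x : X) :
    M.Td d u x ≤ M.Td d v x := by
  unfold Td
  have := M.sum_P_mul_le_of_le (a := d x) (x := x) h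
  nlinarith [M.disc_pos]

lemma Td_contr (d : X → A) {u v : X → ℝ} {c : ℝ} (h : ∀ y, |u y - v y| ≤ c) (x : X) :
    |M.Td d u x - M.Td d v x| ≤ M.disc * c := by
  have h1 : M.Td d u x - M.Td d v x = M.disc * ∑ y, M.P (d x) x y * (u y - v y) := by
    unfold Td
    rw [Finset.mul_sum, Finset.mul_sum]
    rw [show ∀ s t p q : ℝ, (s + p) - (t + q) = p - q + (s - t) from by intros; ring]
    rw [sub_self, add_zero, ← Finset.sum_sub_distrib, Finset.mul_sum]
    exact Finset.sum_congr rfl fun y _ => by ring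
  rw [h1, abs_mul, abs_of_nonneg M.disc_nonneg]
  exact mul_le_mul_of_nonneg_left (M.abs_sum_P_mul_le h) M.disc_nonneg

lemma T_contr {u v : X → ℝ} {c : ℝ} (h : ∀ y, |u y - v y| ≤ c) (x : X) :
    |M.T u x - M.T v x| ≤ M.disc * c := by
  have key : ∀ w z : X → ℝ, (∀ y, |w y - z y| ≤ c) → M.T w x ≤ M.T z x + M.disc * c := by
    intro w z hwz
    refine M.T_le fun a ha => ?_
    have h2 : |∑ y, M.P a x y * (w y - z y)| ≤ c := M.abs_sum_P_mul_le hwz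
    have h3 : ∑ y, M.P a x y * w y - ∑ y, M.P a x y * z y
        = ∑ y, M.P a x y * (w y - z y) := by
      rw [← Finset.sum_sub_distrib]; exact Finset.sum_congr rfl fun y _ => by ring
    have h4 := M.le_T (u := z) ha
    have h5 := abs_le.1 h2
    nlinarith [M.disc_pos]
  have k1 := key u v h
  have k2 := key v u fun y => by rw [abs_sub_comm]; exact h y
  rw [abs_le]
  constructor <;> linarith

lemma dist_nonneg (φ : ℕ → X → A) (x0 : X) : ∀ (l : ℕ) (x : X), 0 ≤ M.dist φ x0 l x := by
  intro l
  induction l with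
  | zero => intro x; simp only [MDP.dist]; split <;> norm_num
  | succ l ih =>
    intro x
    simp only [MDP.dist]
    exact Finset.sum_nonneg fun y _ => mul_nonneg (ih y) (M.P_nonneg _ _ _)

lemma dist_sum (φ : ℕ → X → A) (x0 : X) : ∀ l : ℕ, ∑ x, M.dist φ x0 l x = 1 := by
  intro l
  induction l with
  | zero =>
    simp only [MDP.dist]
    rw [Finset.sum_eq_single_of_mem x0 (Finset.mem_univ x0) (fun b _ hb => if_neg hb)]
    simp
  | succ l ih =>
    simp only [MDP.dist]
    rw [Finset.sum_comm]
    have : ∀ y : X, ∑ x, M.dist φ x0 l y * M.P (φ l y) y x = M.dist φ x0 l y := by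
      intro y; rw [← Finset.mul_sum, M.P_sum, mul_one]
    rw [Finset.sum_congr rfl fun y _ => this y, ih]

lemma dist_shift (φ : ℕ → X → A) (x0 : X) :
    ∀ (l : ℕ) (x : X), M.dist φ x0 (l + 1) x
      = ∑ y, M.P (φ 0 x0) x0 y * M.dist (fun l => φ (l + 1)) y l x := by
  intro l
  induction l with
  | zero =>
    intro x
    simp only [MDP.dist, ite_mul, mul_ite, one_mul, zero_mul, mul_one, mul_zero]
    rw [Finset.sum_eq_single_of_mem x0 (Finset.mem_univ x0) (fun b _ hb => if_neg hb),
      Finset.sum_eq_single_of_mem x (Finset.mem_univ x)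
        (fun b _ hb => if_neg (fun h => hb h.symm))]
    simp
  | succ l ih =>
    intro x
    have e1 : M.dist φ x0 (l + 1 + 1) x = ∑ y, M.dist φ x0 (l + 1) y * M.P (φ (l + 1) y) y x := by
      simp only [MDP.dist]
    rw [e1]
    have e2 : ∀ y, M.dist φ x0 (l + 1) y * M.P (φ (l + 1) y) y x
        = ∑ z, M.P (φ 0 x0) x0 z * (M.dist (fun l => φ (l + 1)) z l y * M.P (φ (l + 1) y) y x) := by
      intro y; rw [ih y, Finset.sum_mul]
      exact Finset.sum_congr rfl fun z _ => by ring
    rw [Finset.sum_congr rfl fun y _ => e2 y, Finset.sum_comm]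
    refine Finset.sum_congr rfl fun z _ => ?_
    rw [← Finset.mul_sum]
    congr 1

lemma exists_R_bound [Nonempty X] : ∃ c : ℝ, 0 ≤ c ∧ ∀ (x : X) (a : A), |M.R x a| ≤ c := by
  haveI : Nonempty A := ⟨(M.adm_nonempty (Classical.arbitrary X)).choose⟩
  refine ⟨Finset.univ.sup' Finset.univ_nonempty (fun p : X × A => |M.R p.1 p.2|), ?_, ?_⟩
  · obtain ⟨p, -⟩ := (Finset.univ_nonempty (α := X × A)).exists_mem
    exact le_trans (abs_nonneg (M.R p.1 p.2))
      (Finset.le_sup' (fun p : X × A => |M.R p.1 p.2|) (Finset.mem_univ p))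
  · intro x a
    exact Finset.le_sup' (fun p : X × A => |M.R p.1 p.2|) (Finset.mem_univ (x, a))

lemma abs_term_le {c : ℝ} (hc : ∀ (x : X) (a : A), |M.R x a| ≤ c)
    (φ : ℕ → X → A) (x0 : X) (l : ℕ) :
    |∑ x, M.dist φ x0 l x * M.R x (φ l x)| ≤ c := by
  calc |∑ x, M.dist φ x0 l x * M.R x (φ l x)| ≤ ∑ x, |M.dist φ x0 l x * M.R x (φ l x)| :=
        Finset.abs_sum_le_sum_abs _ _
    _ ≤ ∑ x, M.dist φ x0 l x * c := by
        refine Finset.sum_le_sum fun x _ => ?_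
        rw [abs_mul, abs_of_nonneg (M.dist_nonneg φ x0 l x)]
        exact mul_le_mul_of_nonneg_left (hc x _) (M.dist_nonneg φ x0 l x)
    _ = c := by rw [← Finset.sum_mul, M.dist_sum, one_mul]

lemma summable_vinf [Nonempty X] (φ : ℕ → X → A) (x0 : X) :
    Summable (fun l : ℕ => M.disc ^ l * ∑ x, M.dist φ x0 l x * M.R x (φ l x)) := by
  obtain ⟨c, hc0, hc⟩ := M.exists_R_bound
  refine Summable.of_norm_bounded (g := fun l => M.disc ^ l * c)
    ((summable_geometric_of_lt_one M.disc_nonneg M.disc_lt_one).mul_right c) fun l => ?_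
  rw [Real.norm_eq_abs, abs_mul, abs_of_nonneg (pow_nonneg M.disc_nonneg l)]
  exact mul_le_mul_of_nonneg_left (M.abs_term_le hc φ x0 l) (pow_nonneg M.disc_nonneg l)

lemma vinf_abs_le [Nonempty X] {c : ℝ} (hc0 : 0 ≤ c) (hc : ∀ (x : X) (a : A), |M.R x a| ≤ c)
    (φ : ℕ → X → A) (x0 : X) : |M.Vinf φ x0| ≤ c / (1 - M.disc) := by
  have hsum := M.summable_vinf φ x0
  have hg : Summable (fun l : ℕ => M.disc ^ l * c) :=
    (summable_geometric_of_lt_one M.disc_nonneg M.disc_lt_one).mul_right c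
  rw [MDP.Vinf]
  have step1 : |∑' l : ℕ, M.disc ^ l * ∑ x, M.dist φ x0 l x * M.R x (φ l x)|
      ≤ ∑' l : ℕ, |M.disc ^ l * ∑ x, M.dist φ x0 l x * M.R x (φ l x)| := by
    have habs := hsum.abs
    simp only [← Real.norm_eq_abs] at habs ⊢
    exact norm_tsum_le_tsum_norm habs
  calc |∑' l : ℕ, M.disc ^ l * ∑ x, M.dist φ x0 l x * M.R x (φ l x)|
      ≤ ∑' l : ℕ, |M.disc ^ l * ∑ x, M.dist φ x0 l x * M.R x (φ l x)| := step1
    _ ≤ ∑' l : ℕ, M.disc ^ l * c := by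
        refine Summable.tsum_le_tsum (fun l => ?_) hsum.abs hg
        rw [abs_mul, abs_of_nonneg (pow_nonneg M.disc_nonneg l)]
        exact mul_le_mul_of_nonneg_left (M.abs_term_le hc φ x0 l) (pow_nonneg M.disc_nonneg l)
    _ = c / (1 - M.disc) := by
        rw [tsum_mul_right, tsum_geometric_of_lt_one M.disc_nonneg M.disc_lt_one]
        rw [div_eq_mul_inv, mul_comm]

lemma vinf_bellman [Nonempty X] (φ : ℕ → X → A) (x0 : X) :
    M.Vinf φ x0 = M.R x0 (φ 0 x0)
      + M.disc * ∑ y, M.P (φ 0 x0) x0 y * M.Vinf (fun l => φ (l + 1)) y := by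
  have hsum := M.summable_vinf φ x0
  rw [MDP.Vinf, Summable.tsum_eq_zero_add hsum]
  congr 1
  · simp only [MDP.dist, pow_zero, one_mul, ite_mul, zero_mul, one_mul]
    rw [Finset.sum_eq_single_of_mem x0 (Finset.mem_univ x0) (fun b _ hb => if_neg hb)]
    simp
  · have h1 : ∀ l : ℕ, M.disc ^ (l + 1) * ∑ x, M.dist φ x0 (l + 1) x * M.R x (φ (l + 1) x)
        = ∑ y, M.P (φ 0 x0) x0 y *
            (M.disc * (M.disc ^ l * ∑ x, M.dist (fun l => φ (l + 1)) y l x * M.R x (φ (l + 1) x))) := by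
      intro l
      conv_lhs => rw [Finset.sum_congr rfl fun x _ => by rw [M.dist_shift φ x0 l x]]
      simp only [Finset.sum_mul, Finset.mul_sum]
      rw [Finset.sum_comm]
      exact Finset.sum_congr rfl fun y _ => Finset.sum_congr rfl fun x _ => by ring
    rw [tsum_congr h1]
    have hsummand : ∀ y ∈ Finset.univ (α := X), Summable (fun l : ℕ => M.P (φ 0 x0) x0 y *
        (M.disc * (M.disc ^ l * ∑ x, M.dist (fun l => φ (l + 1)) y l x * M.R x (φ (l + 1) x)))) := by
      intro y _
      exact ((M.summable_vinf (fun l => φ (l + 1)) y).mul_left _).mul_left _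
    rw [Summable.tsum_finsetSum hsummand, Finset.mul_sum]
    refine Finset.sum_congr rfl fun y _ => ?_
    rw [tsum_mul_left, tsum_mul_left]
    have : M.Vinf (fun l => φ (l + 1)) y
        = ∑' l : ℕ, M.disc ^ l * ∑ x, M.dist (fun l => φ (l + 1)) y l x * M.R x (φ (l + 1) x) := rfl
    rw [← this]
    ring

lemma W_succ (n : ℕ) : M.W (n + 1) = M.T (M.W n) := rfl

lemma bddAbove_vinf [Nonempty X] (x : X) :
    BddAbove (Set.range fun φ : { φ : ℕ → X → A // ∀ l s, φ l s ∈ M.Adm s } => M.Vinf φ.1 x) := by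
  obtain ⟨c, hc0, hc⟩ := M.exists_R_bound
  refine ⟨c / (1 - M.disc), ?_⟩
  rintro v ⟨φ, rfl⟩
  exact le_of_abs_le (M.vinf_abs_le hc0 hc φ.1 x)

lemma vinf_le_vinfopt [Nonempty X] (φ : { φ : ℕ → X → A // ∀ l s, φ l s ∈ M.Adm s }) (x : X) :
    M.Vinf φ.1 x ≤ M.VinfOpt x :=
  le_ciSup (M.bddAbove_vinf x) φ

lemma vinfopt_le_T [Nonempty X] (x : X) : M.VinfOpt x ≤ M.T M.VinfOpt x := by
  haveI : Nonempty { φ : ℕ → X → A // ∀ l s, φ l s ∈ M.Adm s } :=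
    ⟨⟨fun _ s => (M.adm_nonempty s).choose, fun _ s => (M.adm_nonempty s).choose_spec⟩⟩
  refine ciSup_le fun φ => ?_
  rw [M.vinf_bellman φ.1 x]
  have hshift : ∀ y, M.Vinf (fun l => φ.1 (l + 1)) y ≤ M.VinfOpt y := fun y =>
    M.vinf_le_vinfopt ⟨fun l => φ.1 (l + 1), fun l s => φ.2 (l + 1) s⟩ y
  have hsum := M.sum_P_mul_le_of_le (a := φ.1 0 x) (x := x) hshift
  have hT := M.le_T (u := M.VinfOpt) (φ.2 0 x)
  nlinarith [M.disc_pos]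

lemma exists_greedy (u : X → ℝ) (x : X) :
    ∃ a ∈ M.Adm x, M.T u x = M.R x a + M.disc * ∑ y, M.P a x y * u y := by
  obtain ⟨a, ha, h⟩ := Finset.exists_mem_eq_sup' (M.adm_nonempty x)
    (fun a => M.R x a + M.disc * ∑ y, M.P a x y * u y)
  exact ⟨a, ha, h⟩

lemma vinfopt_fixed [Nonempty X] : ∀ x, M.T M.VinfOpt x = M.VinfOpt x := by
  choose g hgadm hgeq using fun x : X => M.exists_greedy M.VinfOpt x
  set V : X → ℝ := fun x => M.Vinf (fun _ => g) x with hV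
  have hbell : ∀ x, V x = M.Td g V x := fun x => M.vinf_bellman (fun _ => g) x
  have hle : ∀ x, V x ≤ M.VinfOpt x := fun x =>
    M.vinf_le_vinfopt ⟨fun _ => g, fun _ s => hgadm s⟩ x
  have hopt_le : ∀ x, M.VinfOpt x ≤ M.Td g M.VinfOpt x := fun x =>
    (M.vinfopt_le_T x).trans_eq (hgeq x)
  set D := Finset.univ.sup' Finset.univ_nonempty (fun x => M.VinfOpt x - V x) with hD
  have hDle : ∀ x, M.VinfOpt x - V x ≤ D := fun x =>
    Finset.le_sup' (fun x => M.VinfOpt x - V x) (Finset.mem_univ x)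
  have hstep : ∀ x, M.VinfOpt x - V x ≤ M.disc * D := by
    intro x
    have h1 : M.VinfOpt x - V x ≤ M.Td g M.VinfOpt x - M.Td g V x := by
      have := hopt_le x; have := hbell x; linarith
    have h2 : M.Td g M.VinfOpt x - M.Td g V x ≤ M.disc * D := by
      have hs : ∑ y, M.P (g x) x y * M.VinfOpt y - ∑ y, M.P (g x) x y * V y
          = ∑ y, M.P (g x) x y * (M.VinfOpt y - V y) := by
        rw [← Finset.sum_sub_distrib]; exact Finset.sum_congr rfl fun y _ => by ring
      have hsle : ∑ y, M.P (g x) x y * (M.VinfOpt y - V y) ≤ D := by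
        calc ∑ y, M.P (g x) x y * (M.VinfOpt y - V y) ≤ ∑ y, M.P (g x) x y * D :=
              M.sum_P_mul_le_of_le hDle
          _ = D := by rw [← Finset.sum_mul, M.P_sum, one_mul]
      have hTd : M.Td g M.VinfOpt x - M.Td g V x
          = M.disc * (∑ y, M.P (g x) x y * M.VinfOpt y - ∑ y, M.P (g x) x y * V y) := by
        unfold MDP.Td; ring
      rw [hTd, hs]
      exact mul_le_mul_of_nonneg_left hsle M.disc_nonneg
    linarith
  have hDD : D ≤ M.disc * D := by
    obtain ⟨x, -, hx⟩ := Finset.exists_mem_eq_sup' (Finset.univ_nonempty (α := X))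
      (fun x => M.VinfOpt x - V x)
    calc D = M.VinfOpt x - V x := hx
      _ ≤ M.disc * D := hstep x
  have hD0 : D ≤ 0 := by nlinarith [M.disc_lt_one]
  have heq : ∀ x, M.VinfOpt x = V x := fun x =>
    le_antisymm (by have := hDle x; linarith) (hle x)
  intro x
  have hTd_eq : M.Td g M.VinfOpt x = M.Td g V x := by
    unfold MDP.Td
    rw [Finset.sum_congr rfl fun y _ => by rw [heq y]]
  calc M.T M.VinfOpt x = M.Td g M.VinfOpt x := hgeq x
    _ = M.Td g V x := hTd_eq
    _ = V x := (hbell x).symm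
    _ = M.VinfOpt x := (heq x).symm

lemma val_le_W {H : ℕ} (π : M.Pol H) : ∀ h, h ≤ H → ∀ x, M.val π.1 h x ≤ M.W h x := by
  intro h
  induction h with
  | zero => intro _ x; simp [MDP.val, MDP.W]
  | succ h ih =>
    intro hle x
    have hlt : H - (h + 1) < H := by omega
    have hW : M.W (h + 1) x = M.T (M.W h) x := rfl
    simp only [MDP.val]
    rw [dif_pos hlt, hW]
    refine le_trans ?_ (M.le_T (π.2 ⟨H - (h + 1), hlt⟩ x))
    have hsum := M.sum_P_mul_le_of_le (a := π.1 ⟨H - (h + 1), hlt⟩ x) (x := x)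
      (fun y => ih (by omega) y)
    nlinarith [M.disc_pos]

lemma exists_opt_pol (H : ℕ) : ∃ τ : M.Pol H, ∀ h ≤ H, ∀ x, M.val τ.1 h x = M.W h x := by
  choose g hgadm hgeq using fun (k : ℕ) (x : X) => M.exists_greedy (M.W k) x
  refine ⟨⟨fun m x => g (H - 1 - m.1) x, fun m x => hgadm _ x⟩, ?_⟩
  intro h
  induction h with
  | zero => intro _ x; simp [MDP.val, MDP.W]
  | succ h ih =>
    intro hle x
    have hlt : H - (h + 1) < H := by omega
    have hW : M.W (h + 1) x = M.T (M.W h) x := rfl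
    simp only [MDP.val]
    rw [dif_pos hlt, hW]
    have harg : H - 1 - (H - (h + 1)) = h := by omega
    have hent : g (H - 1 - (⟨H - (h + 1), hlt⟩ : Fin H).1) x = g h x := by
      simp only [harg]
    rw [hent, hgeq h x]
    congr 1
    rw [Finset.mul_sum, Finset.mul_sum]
    refine Finset.sum_congr rfl fun y _ => ?_
    rw [ih (by omega) y]

lemma W_sub_vinfopt [Nonempty X] {C : ℝ} (hC : ∀ x, |M.VinfOpt x| ≤ C) :
    ∀ (n : ℕ) (x : X), |M.W n x - M.VinfOpt x| ≤ M.disc ^ n * C := by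
  intro n
  induction n with
  | zero =>
    intro x
    have : M.W 0 x = 0 := rfl
    rw [this, zero_sub, abs_neg, pow_zero, one_mul]
    exact hC x
  | succ n ih =>
    intro x
    have h1 : |M.T (M.W n) x - M.T M.VinfOpt x| ≤ M.disc * (M.disc ^ n * C) :=
      M.T_contr ih x
    rw [M.vinfopt_fixed x] at h1
    have h2 : M.W (n + 1) x = M.T (M.W n) x := rfl
    rw [h2]
    calc |M.T (M.W n) x - M.VinfOpt x| ≤ M.disc * (M.disc ^ n * C) := h1
      _ = M.disc ^ (n + 1) * C := by ring

end MDP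

/-- rolling-horizon error bound: the stationary policy repeating the first
entry of an optimal `H`-length policy (with zero terminal function) satisfies
`‖V^{[π*(H)_1]}_∞ − V*_∞‖_∞ ≤ (2 γ^H / (1 − γ)) ‖V*_∞‖_∞`. -/
theorem rolling_horizon_error_bound (M : MDP X A) [Nonempty X] {H : ℕ} (hH : 1 ≤ H)
    (πs : M.Pol H) (hopt : ∀ x, M.val πs.1 H x = M.Vopt H x) :
    ∀ x : X, |M.Vinf (fun _ => πs.1 ⟨0, hH⟩) x - M.VinfOpt x| ≤
      2 * M.disc ^ H / (1 - M.disc) *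
        Finset.univ.sup' Finset.univ_nonempty (fun y : X => |M.VinfOpt y|) := by
  obtain ⟨K, rfl⟩ : ∃ K, H = K + 1 := ⟨H - 1, by omega⟩
  set C := Finset.univ.sup' Finset.univ_nonempty (fun y : X => |M.VinfOpt y|) with hCdef
  have hC : ∀ y, |M.VinfOpt y| ≤ C := fun y =>
    Finset.le_sup' (fun y : X => |M.VinfOpt y|) (Finset.mem_univ y)
  set d : X → A := πs.1 ⟨0, hH⟩ with hd
  -- value of the H-optimal policy unfolds through Td
  have hunf : ∀ y, M.val πs.1 (K + 1) y = M.Td d (M.val πs.1 K) y := by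
    intro y
    have hlt : (K + 1) - (K + 1) < K + 1 := by omega
    have hfin : (⟨(K + 1) - (K + 1), hlt⟩ : Fin (K + 1)) = ⟨0, hH⟩ := by
      ext; simp
    simp only [MDP.val]
    rw [dif_pos hlt, hfin]
    rfl
  -- Vopt (K+1) = W (K+1)
  have hWopt : ∀ y, M.Vopt (K + 1) y = M.W (K + 1) y := by
    intro y
    refine le_antisymm ?_ ?_
    · exact Finset.sup'_le _ _ fun π _ => M.val_le_W π (K + 1) le_rfl y
    · obtain ⟨τ, hτ⟩ := M.exists_opt_pol (K + 1)
      calc M.W (K + 1) y = M.val τ.1 (K + 1) y := (hτ (K + 1) le_rfl y).symm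
        _ ≤ M.Vopt (K + 1) y :=
            Finset.le_sup' (fun π : M.Pol (K + 1) => M.val π.1 (K + 1) y) (Finset.mem_univ τ)
  -- d is greedy with respect to W K
  have greedy : ∀ y, M.Td d (M.W K) y = M.T (M.W K) y := by
    intro y
    have h1 : M.W (K + 1) y = M.Td d (M.val πs.1 K) y := by
      rw [← hWopt y, ← hopt y, hunf y]
    have h2 : M.Td d (M.val πs.1 K) y ≤ M.Td d (M.W K) y :=
      M.Td_mono (fun z => M.val_le_W πs K (by omega) z) y
    have h3 : M.Td d (M.W K) y ≤ M.T (M.W K) y := M.Td_le_T (πs.2 ⟨0, hH⟩ y)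
    have h4 : M.T (M.W K) y = M.W (K + 1) y := rfl
    have h5 : M.T (M.W K) y ≤ M.Td d (M.W K) y := by linarith
    exact le_antisymm h3 h5
  -- the stationary policy value and its Bellman equation
  set V : X → ℝ := fun y => M.Vinf (fun _ => d) y with hV
  have hVbell : ∀ y, V y = M.Td d V y := fun y => M.vinf_bellman (fun _ => d) y
  have hWerr : ∀ y, |M.W K y - M.VinfOpt y| ≤ M.disc ^ K * C := M.W_sub_vinfopt hC K
  set E := Finset.univ.sup' Finset.univ_nonempty (fun y : X => |V y - M.VinfOpt y|) with hE
  have hEle : ∀ y, |V y - M.VinfOpt y| ≤ E := fun y =>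
    Finset.le_sup' (fun y : X => |V y - M.VinfOpt y|) (Finset.mem_univ y)
  have hstep : ∀ y, |V y - M.VinfOpt y| ≤ M.disc * E + 2 * (M.disc * (M.disc ^ K * C)) := by
    intro y
    have t1 : |M.Td d V y - M.Td d M.VinfOpt y| ≤ M.disc * E := M.Td_contr d hEle y
    have t2 : |M.Td d M.VinfOpt y - M.Td d (M.W K) y| ≤ M.disc * (M.disc ^ K * C) :=
      M.Td_contr d (fun z => by rw [abs_sub_comm]; exact hWerr z) y
    have t3 : |M.T (M.W K) y - M.T M.VinfOpt y| ≤ M.disc * (M.disc ^ K * C) := M.T_contr hWerr y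
    have t4 : M.Td d (M.W K) y = M.T (M.W K) y := greedy y
    have t5 : M.T M.VinfOpt y = M.VinfOpt y := M.vinfopt_fixed y
    have expand : V y - M.VinfOpt y = (M.Td d V y - M.Td d M.VinfOpt y)
        + (M.Td d M.VinfOpt y - M.Td d (M.W K) y) + (M.T (M.W K) y - M.T M.VinfOpt y) := by
      have h6 := hVbell y
      linarith
    calc |V y - M.VinfOpt y| = |(M.Td d V y - M.Td d M.VinfOpt y)
          + (M.Td d M.VinfOpt y - M.Td d (M.W K) y) + (M.T (M.W K) y - M.T M.VinfOpt y)| := by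
          rw [expand]
      _ ≤ |(M.Td d V y - M.Td d M.VinfOpt y) + (M.Td d M.VinfOpt y - M.Td d (M.W K) y)|
          + |M.T (M.W K) y - M.T M.VinfOpt y| := abs_add_le _ _
      _ ≤ |M.Td d V y - M.Td d M.VinfOpt y| + |M.Td d M.VinfOpt y - M.Td d (M.W K) y|
          + |M.T (M.W K) y - M.T M.VinfOpt y| := by
          have := abs_add_le (M.Td d V y - M.Td d M.VinfOpt y)
            (M.Td d M.VinfOpt y - M.Td d (M.W K) y)
          linarith
      _ ≤ M.disc * E + 2 * (M.disc * (M.disc ^ K * C)) := by linarith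
  have hEb : E ≤ M.disc * E + 2 * (M.disc * (M.disc ^ K * C)) := by
    obtain ⟨y, -, hy⟩ := Finset.exists_mem_eq_sup' (Finset.univ_nonempty (α := X))
      (fun y : X => |V y - M.VinfOpt y|)
    calc E = |V y - M.VinfOpt y| := hy
      _ ≤ M.disc * E + 2 * (M.disc * (M.disc ^ K * C)) := hstep y
  have h1γ : 0 < 1 - M.disc := by have := M.disc_lt_one; linarith
  have hEfin : E ≤ 2 * M.disc ^ (K + 1) * C / (1 - M.disc) := by
    rw [le_div_iff₀ h1γ]
    have hp : M.disc ^ (K + 1) = M.disc ^ K * M.disc := pow_succ _ _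
    calc E * (1 - M.disc) = E - M.disc * E := by ring
      _ ≤ 2 * (M.disc * (M.disc ^ K * C)) := by linarith
      _ = 2 * M.disc ^ (K + 1) * C := by rw [hp]; ring
  intro x
  calc |M.Vinf (fun _ => πs.1 ⟨0, hH⟩) x - M.VinfOpt x| = |V x - M.VinfOpt x| := rfl
    _ ≤ E := hEle x
    _ ≤ 2 * M.disc ^ (K + 1) * C / (1 - M.disc) := hEfin
    _ = 2 * M.disc ^ (K + 1) / (1 - M.disc) * C := by ring
end
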